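/- arXiv:1708.02930 — 3 statements merged into one kernel-verified Lean document; each statement's English description precedes it below -/
import Mathlib

section
/- If λ ≠ 0 is an eigenvalue of Δ_k (i.e. there exists α ∈ V_k, α ≠ 0, with Δ_k α = λ • α), then λ is an eigenvalue of Δ_{k−1} or an eigenvalue of Δ_{k+1}. (Abstract form of: the positive spectrum of the Laplacian on k-forms is contained in the union of the spectra of the Laplacians on (k−1)-forms and (k+1)-forms.) -/
/-- For a complex `(V_k, d_k)` of inner product spaces with formal adjoints
`δ_k` and Laplacians `Δ_k = δ_k ∘ d_k + d_{k-1} ∘ δ_{k-1}` (encoded by the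
defining property `Δ_{k+1} = δ_{k+1} ∘ d_{k+1} + d_k ∘ δ_k` for all `k`):
every nonzero eigenvalue of `Δ_k` is an eigenvalue of `Δ_{k-1}` or of
`Δ_{k+1}`. -/
theorem positive_spectrum_adjacent
    (V : ℤ → Type*) [∀ k, NormedAddCommGroup (V k)] [∀ k, InnerProductSpace ℂ (V k)]
    (d : ∀ k, V k →ₗ[ℂ] V (k + 1))
    (δ : ∀ k, V (k + 1) →ₗ[ℂ] V k)
    (hdd : ∀ k, d (k + 1) ∘ₗ d k = 0)
    (hadj : ∀ (k : ℤ) (x : V k) (y : V (k + 1)), (inner ℂ (d k x) y : ℂ) = inner ℂ x (δ k y))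
    (Δ : ∀ k, V k →ₗ[ℂ] V k)
    (hΔ : ∀ k, Δ (k + 1) = δ (k + 1) ∘ₗ d (k + 1) + d k ∘ₗ δ k)
    (k : ℤ) (lam : ℂ) (hlam : lam ≠ 0)
    (α : V k) (hα : α ≠ 0) (heig : Δ k α = lam • α) :
    (∃ β : V (k - 1), β ≠ 0 ∧ Δ (k - 1) β = lam • β) ∨
    (∃ γ : V (k + 1), γ ≠ 0 ∧ Δ (k + 1) γ = lam • γ) := by
  -- δ ∘ δ = 0, from d ∘ d = 0 by adjointness
  have hδδ : ∀ (m : ℤ) (y : V (m + 1 + 1)), δ m (δ (m + 1) y) = 0 := by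
    intro m y
    have h0 : (inner ℂ (δ m (δ (m + 1) y)) (δ m (δ (m + 1) y)) : ℂ) = 0 := by
      rw [← hadj m, ← hadj (m + 1)]
      have : d (m + 1) (d m (δ m (δ (m + 1) y))) = 0 := by
        have := congrArg (fun f => f (δ m (δ (m + 1) y))) (hdd m)
        simpa using this
      rw [this, inner_zero_left]
    exact inner_self_eq_zero.mp h0
  obtain ⟨i, rfl⟩ : ∃ i, k = i + 1 + 1 := ⟨k - 2, by ring⟩
  rw [show (i : ℤ) + 1 + 1 - 1 = i + 1 by ring]
  have hD : δ (i + 1 + 1) (d (i + 1 + 1) α) + d (i + 1) (δ (i + 1) α) = lam • α := by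
    rw [← heig, hΔ (i + 1)]; rfl
  by_cases hb : δ (i + 1) α = 0
  · -- then d α is a nonzero eigenvector of Δ (k+1)
    right
    have hd : δ (i + 1 + 1) (d (i + 1 + 1) α) = lam • α := by
      rw [← hD, hb]; simp
    refine ⟨d (i + 1 + 1) α, ?_, ?_⟩
    · intro h
      rw [h, map_zero] at hd
      exact hα (by simpa [smul_eq_zero, hlam] using hd.symm)
    · rw [hΔ (i + 1 + 1)]
      have hzero : d (i + 1 + 1 + 1) (d (i + 1 + 1) α) = 0 := by
        have := congrArg (fun f => f α) (hdd (i + 1 + 1))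
        simpa using this
      simp only [LinearMap.add_apply, LinearMap.comp_apply, hzero, map_zero, zero_add, hd,
        map_smul]
  · -- δ α is a nonzero eigenvector of Δ (k-1)
    left
    refine ⟨δ (i + 1) α, hb, ?_⟩
    rw [hΔ i]
    have h1 : δ i (δ (i + 1) α) = 0 := hδδ i α
    have h2 : d (i + 1) (δ (i + 1) α) = lam • α - δ (i + 1 + 1) (d (i + 1 + 1) α) := by
      rw [← hD]; abel
    simp only [LinearMap.add_apply, LinearMap.comp_apply, h1, map_zero, add_zero, h2,
      map_sub, map_smul, hδδ (i + 1) (d (i + 1 + 1) α), sub_zero]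
end

section
/- Suppose λ ≠ 0 and the eigenspaces E_λ(Δ_{k−1}) = {α ∈ V_{k−1} | Δ_{k−1} α = λ • α} and E_λ(Δ_{k+1}) are finite-dimensional. Then E_λ(Δ_k) is finite-dimensional and dim E_λ(Δ_k) ≤ dim E_λ(Δ_{k−1}) + dim E_λ(Δ_{k+1}). (Abstract form of Theorem 2(a): b^k_λ ≤ b^{k−1}_λ + b^{k+1}_λ for λ > 0.) -/
/-- For a complex `(V_k, d_k)` of inner product spaces with formal adjoints
`δ_k` and Laplacians `Δ_k = δ_k ∘ d_k + d_{k-1} ∘ δ_{k-1}` (encoded by the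
defining property `Δ_{k+1} = δ_{k+1} ∘ d_{k+1} + d_k ∘ δ_k` for all `k`):
if `λ ≠ 0` and the eigenspaces `E_λ(Δ_{k-1})` and `E_λ(Δ_{k+1})` are finite
dimensional, then `E_λ(Δ_k)` is finite dimensional and
`dim E_λ(Δ_k) ≤ dim E_λ(Δ_{k-1}) + dim E_λ(Δ_{k+1})`. -/
theorem eigenspace_dim_le_adjacent_sum
    (V : ℤ → Type*) [∀ k, NormedAddCommGroup (V k)] [∀ k, InnerProductSpace ℂ (V k)]
    (d : ∀ k, V k →ₗ[ℂ] V (k + 1))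
    (δ : ∀ k, V (k + 1) →ₗ[ℂ] V k)
    (hdd : ∀ k, d (k + 1) ∘ₗ d k = 0)
    (hadj : ∀ (k : ℤ) (x : V k) (y : V (k + 1)), (inner ℂ (d k x) y : ℂ) = inner ℂ x (δ k y))
    (Δ : ∀ k, V k →ₗ[ℂ] V k)
    (hΔ : ∀ k, Δ (k + 1) = δ (k + 1) ∘ₗ d (k + 1) + d k ∘ₗ δ k)
    (k : ℤ) (lam : ℂ) (hlam : lam ≠ 0)
    (h1 : FiniteDimensional ℂ (LinearMap.ker (Δ (k - 1) - lam • LinearMap.id)))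
    (h2 : FiniteDimensional ℂ (LinearMap.ker (Δ (k + 1) - lam • LinearMap.id))) :
    FiniteDimensional ℂ (LinearMap.ker (Δ k - lam • LinearMap.id)) ∧
    Module.finrank ℂ (LinearMap.ker (Δ k - lam • LinearMap.id)) ≤
      Module.finrank ℂ (LinearMap.ker (Δ (k - 1) - lam • LinearMap.id)) +
      Module.finrank ℂ (LinearMap.ker (Δ (k + 1) - lam • LinearMap.id)) := by
  obtain ⟨i, rfl⟩ : ∃ i, k = i + 1 + 1 := ⟨k - 1 - 1, by ring⟩
  have e : i + 1 + 1 - 1 = i + 1 := by ring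
  rw [e] at h1 ⊢
  have hdd' : ∀ (n : ℤ) (x : V n), d (n + 1) (d n x) = 0 := fun n x =>
    LinearMap.congr_fun (hdd n) x
  have hδδ : ∀ (n : ℤ) (y : V (n + 1 + 1)), δ n (δ (n + 1) y) = 0 := by
    intro n y
    have h0 : (inner ℂ (δ n (δ (n + 1) y)) (δ n (δ (n + 1) y)) : ℂ) = 0 := by
      rw [← hadj n, ← hadj (n + 1), hdd' n, inner_zero_left]
    exact inner_self_eq_zero.mp h0
  have hmem : ∀ (n : ℤ) (x : V n),
      x ∈ LinearMap.ker (Δ n - lam • LinearMap.id) ↔ Δ n x = lam • x := by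
    intro n x
    simp [LinearMap.mem_ker, sub_eq_zero]
  -- δ maps the middle eigenspace into the lower one
  have hβ : ∀ x : V (i + 1 + 1), Δ (i + 1 + 1) x = lam • x →
      Δ (i + 1) (δ (i + 1) x) = lam • δ (i + 1) x := by
    intro x hx
    have ha := LinearMap.congr_fun (hΔ i) (δ (i + 1) x)
    have hb := LinearMap.congr_fun (hΔ (i + 1)) x
    simp only [LinearMap.add_apply, LinearMap.comp_apply] at ha hb
    have hd : d (i + 1) (δ (i + 1) x) = lam • x - δ (i + 1 + 1) (d (i + 1 + 1) x) := by
      rw [← hx, hb]; abel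
    rw [ha, hδδ i x, map_zero, add_zero, hd, map_sub, map_smul, hδδ (i + 1), sub_zero]
  -- d maps the middle eigenspace into the upper one
  have hγ : ∀ x : V (i + 1 + 1), Δ (i + 1 + 1) x = lam • x →
      Δ (i + 1 + 1 + 1) (d (i + 1 + 1) x) = lam • d (i + 1 + 1) x := by
    intro x hx
    have ha := LinearMap.congr_fun (hΔ (i + 1 + 1)) (d (i + 1 + 1) x)
    have hb := LinearMap.congr_fun (hΔ (i + 1)) x
    simp only [LinearMap.add_apply, LinearMap.comp_apply] at ha hb
    have hd : δ (i + 1 + 1) (d (i + 1 + 1) x) = lam • x - d (i + 1) (δ (i + 1) x) := by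
      rw [← hx, hb]; abel
    rw [ha, hdd' (i + 1 + 1), map_zero, zero_add, hd, map_sub, map_smul,
      hdd' (i + 1), sub_zero]
  set A := LinearMap.ker (Δ (i + 1) - lam • LinearMap.id) with hA
  set E := LinearMap.ker (Δ (i + 1 + 1) - lam • LinearMap.id) with hE
  set B := LinearMap.ker (Δ (i + 1 + 1 + 1) - lam • LinearMap.id) with hB
  let g1 : E →ₗ[ℂ] A :=
    LinearMap.codRestrict A ((δ (i + 1)).comp E.subtype)
      (fun x => (hmem _ _).mpr (hβ x ((hmem _ _).mp x.2)))
  let g2 : E →ₗ[ℂ] B :=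
    LinearMap.codRestrict B ((d (i + 1 + 1)).comp E.subtype)
      (fun x => (hmem _ _).mpr (hγ x ((hmem _ _).mp x.2)))
  let f : E →ₗ[ℂ] A × B := g1.prod g2
  have hinj : Function.Injective f := by
    rw [injective_iff_map_eq_zero]
    intro x hx
    have hx1 : δ (i + 1) (x : V (i + 1 + 1)) = 0 := congrArg Subtype.val (congrArg Prod.fst hx)
    have hx2 : d (i + 1 + 1) (x : V (i + 1 + 1)) = 0 := congrArg Subtype.val (congrArg Prod.snd hx)
    have hxe : Δ (i + 1 + 1) (x : V (i + 1 + 1)) = lam • (x : V (i + 1 + 1)) :=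
      (hmem _ _).mp x.2
    have hb := LinearMap.congr_fun (hΔ (i + 1)) (x : V (i + 1 + 1))
    simp only [LinearMap.add_apply, LinearMap.comp_apply] at hb
    rw [hx1, hx2, map_zero, map_zero, add_zero, hxe] at hb
    have : (x : V (i + 1 + 1)) = 0 := by
      rcases smul_eq_zero.mp hb with h | h
      · exact absurd h hlam
      · exact h
    exact Subtype.ext this
  haveI : FiniteDimensional ℂ (A × B) := by infer_instance
  have hfd : FiniteDimensional ℂ E := FiniteDimensional.of_injective f hinj
  refine ⟨hfd, ?_⟩
  calc Module.finrank ℂ E ≤ Module.finrank ℂ (A × B) :=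
        LinearMap.finrank_le_finrank_of_injective hinj
    _ = Module.finrank ℂ A + Module.finrank ℂ B := Module.finrank_prod
end

section
/- Suppose λ ≠ 0, the eigenspaces E_λ(Δ_{p+1,q}) and E_λ(Δ_{p,q+1}) are finite-dimensional, and L : V_{p,q} →ₗ[ℂ] V_{p+1,q+1} is a linear map satisfying L ∘ ∂_{p,q} = ∂_{p+1,q} ∘ L (as maps V_{p,q} → V_{p+1,q+1}), Δ_{p+1,q+1} ∘ L = L ∘ Δ_{p,q}, and L injective on E_λ(Δ_{p,q}). Then E_λ(Δ_{p,q}) is finite-dimensional and dim E_λ(Δ_{p,q}) ≤ dim E_λ(Δ_{p+1,q}) + dim E_λ(Δ_{p,q+1}). (Abstract form of Theorem 2(b): h^{p,q}_λ ≤ h^{p+1,q}_λ + h^{p,q+1}_λ for p + q < n and λ > 0.) -/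
/-- Abstract form of Theorem 2(b): for a doubly graded family `(V_{p,q})` with
square-zero maps `∂_{p,q} : V_{p,q} → V_{p,q+1}`, formal adjoints `∂†_{p,q}`,
Laplacians `Δ_{p,q} = ∂†_{p,q} ∘ ∂_{p,q} + ∂_{p,q-1} ∘ ∂†_{p,q-1}` (encoded by
the defining property at all indices), and a Lefschetz-type family of maps
`L_{p,q} : V_{p,q} → V_{p+1,q+1}` commuting with `∂` and `Δ`: if `λ ≠ 0`,
`L` is injective on `E_λ(Δ_{p,q})`, and `E_λ(Δ_{p+1,q})`, `E_λ(Δ_{p,q+1})` are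
finite dimensional, then `E_λ(Δ_{p,q})` is finite dimensional and
`dim E_λ(Δ_{p,q}) ≤ dim E_λ(Δ_{p+1,q}) + dim E_λ(Δ_{p,q+1})`. -/
theorem hodge_multiplicity_ineq
    (V : ℤ → ℤ → Type*) [∀ p q, NormedAddCommGroup (V p q)]
    [∀ p q, InnerProductSpace ℂ (V p q)]
    (dbar : ∀ p q, V p q →ₗ[ℂ] V p (q + 1))
    (dbar' : ∀ p q, V p (q + 1) →ₗ[ℂ] V p q)
    (hdd : ∀ p q, dbar p (q + 1) ∘ₗ dbar p q = 0)
    (hadj : ∀ (p q : ℤ) (x : V p q) (y : V p (q + 1)),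
      (inner ℂ (dbar p q x) y : ℂ) = inner ℂ x (dbar' p q y))
    (Δ : ∀ p q, V p q →ₗ[ℂ] V p q)
    (hΔ : ∀ p q, Δ p (q + 1) = dbar' p (q + 1) ∘ₗ dbar p (q + 1) + dbar p q ∘ₗ dbar' p q)
    (L : ∀ p q, V p q →ₗ[ℂ] V (p + 1) (q + 1))
    (hLd : ∀ p q, L p (q + 1) ∘ₗ dbar p q = dbar (p + 1) (q + 1) ∘ₗ L p q)
    (hLΔ : ∀ p q, Δ (p + 1) (q + 1) ∘ₗ L p q = L p q ∘ₗ Δ p q)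
    (p q : ℤ) (lam : ℂ) (hlam : lam ≠ 0)
    (hLinj : ∀ α : V p q, Δ p q α = lam • α → L p q α = 0 → α = 0)
    (h1 : FiniteDimensional ℂ (LinearMap.ker (Δ (p + 1) q - lam • LinearMap.id)))
    (h2 : FiniteDimensional ℂ (LinearMap.ker (Δ p (q + 1) - lam • LinearMap.id))) :
    FiniteDimensional ℂ (LinearMap.ker (Δ p q - lam • LinearMap.id)) ∧
    Module.finrank ℂ (LinearMap.ker (Δ p q - lam • LinearMap.id)) ≤
      Module.finrank ℂ (LinearMap.ker (Δ (p + 1) q - lam • LinearMap.id)) +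
      Module.finrank ℂ (LinearMap.ker (Δ p (q + 1) - lam • LinearMap.id)) := by
  obtain ⟨r, rfl⟩ : ∃ r, q = r + 1 := ⟨q - 1, by ring⟩
  -- ∂† ∘ ∂† = 0
  have hdd' : ∀ (p' q' : ℤ) (y : V p' (q' + 1 + 1)),
      dbar' p' q' (dbar' p' (q' + 1) y) = 0 := by
    intro p' q' y
    have h0 : ∀ x : V p' q',
        (inner ℂ x (dbar' p' q' (dbar' p' (q' + 1) y)) : ℂ) = 0 := by
      intro x
      rw [← hadj, ← hadj]
      have hz : dbar p' (q' + 1) (dbar p' q' x) = 0 := by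
        have := LinearMap.ext_iff.mp (hdd p' q') x
        simpa [LinearMap.comp_apply] using this
      rw [hz, inner_zero_left]
    have := h0 (dbar' p' q' (dbar' p' (q' + 1) y))
    exact inner_self_eq_zero.mp this
  have mem_iff : ∀ (p' q' : ℤ) (x : V p' q'),
      x ∈ LinearMap.ker (Δ p' q' - lam • LinearMap.id) ↔ Δ p' q' x = lam • x := by
    intro p' q' x
    simp [LinearMap.mem_ker, LinearMap.sub_apply, LinearMap.smul_apply, sub_eq_zero]
  -- the two component maps send eigenvectors to eigenvectors
  have e1 : ∀ x : V p (r + 1), Δ p (r + 1) x = lam • x →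
      Δ (p + 1) (r + 1) (dbar' (p + 1) (r + 1) (L p (r + 1) x))
        = lam • dbar' (p + 1) (r + 1) (L p (r + 1) x) := by
    intro x hx
    set β := L p (r + 1) x with hβdef
    have hβ : Δ (p + 1) (r + 1 + 1) β = lam • β := by
      have := LinearMap.ext_iff.mp (hLΔ p (r + 1)) x
      simp only [LinearMap.comp_apply] at this
      rw [hβdef, this, hx, map_smul]
    have hsplit : dbar (p + 1) (r + 1) (dbar' (p + 1) (r + 1) β)
        = lam • β - dbar' (p + 1) (r + 1 + 1) (dbar (p + 1) (r + 1 + 1) β) := by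
      have := LinearMap.ext_iff.mp (hΔ (p + 1) (r + 1)) β
      simp only [LinearMap.add_apply, LinearMap.comp_apply] at this
      rw [hβ] at this
      rw [eq_sub_iff_add_eq]
      exact (add_comm _ _).trans this.symm
    rw [hΔ (p + 1) r]
    simp only [LinearMap.add_apply, LinearMap.comp_apply]
    rw [hdd' (p + 1) r β, map_zero, add_zero, hsplit, map_sub, map_smul,
      hdd' (p + 1) (r + 1) (dbar (p + 1) (r + 1 + 1) β), sub_zero]
  have e2 : ∀ x : V p (r + 1), Δ p (r + 1) x = lam • x →
      Δ p (r + 1 + 1) (dbar p (r + 1) x) = lam • dbar p (r + 1) x := by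
    intro x hx
    have hsplit : dbar' p (r + 1) (dbar p (r + 1) x)
        = lam • x - dbar p r (dbar' p r x) := by
      have := LinearMap.ext_iff.mp (hΔ p r) x
      simp only [LinearMap.add_apply, LinearMap.comp_apply] at this
      rw [hx] at this
      rw [eq_sub_iff_add_eq]
      exact this.symm
    have hz : dbar' p (r + 1 + 1) (dbar p (r + 1 + 1) (dbar p (r + 1) x)) = 0 := by
      have := LinearMap.ext_iff.mp (hdd p (r + 1)) x
      simp only [LinearMap.comp_apply, LinearMap.zero_apply] at this
      rw [this, map_zero]
    have hz2 : dbar p (r + 1) (dbar p r (dbar' p r x)) = 0 := by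
      have := LinearMap.ext_iff.mp (hdd p r) (dbar' p r x)
      simpa [LinearMap.comp_apply] using this
    rw [hΔ p (r + 1)]
    simp only [LinearMap.add_apply, LinearMap.comp_apply]
    rw [hz, zero_add, hsplit, map_sub, map_smul, hz2, sub_zero]
  -- injectivity on eigenvectors
  have inj : ∀ x : V p (r + 1), Δ p (r + 1) x = lam • x →
      dbar' (p + 1) (r + 1) (L p (r + 1) x) = 0 → dbar p (r + 1) x = 0 → x = 0 := by
    intro x hx h1' h2'
    set β := L p (r + 1) x with hβdef
    have hdβ : dbar (p + 1) (r + 1 + 1) β = 0 := by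
      have := LinearMap.ext_iff.mp (hLd p (r + 1)) x
      simp only [LinearMap.comp_apply] at this
      rw [hβdef, ← this, h2', map_zero]
    have hβ : Δ (p + 1) (r + 1 + 1) β = lam • β := by
      have := LinearMap.ext_iff.mp (hLΔ p (r + 1)) x
      simp only [LinearMap.comp_apply] at this
      rw [hβdef, this, hx, map_smul]
    have hΔβ : Δ (p + 1) (r + 1 + 1) β = 0 := by
      rw [hΔ (p + 1) (r + 1)]
      simp only [LinearMap.add_apply, LinearMap.comp_apply]
      rw [hdβ, map_zero, h1', map_zero, add_zero]
    have hβ0 : β = 0 := by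
      have : lam • β = 0 := by rw [← hβ, hΔβ]
      rcases smul_eq_zero.mp this with h | h
      · exact absurd h hlam
      · exact h
    exact hLinj x hx hβ0
  -- assemble the injective linear map into the product
  set K := LinearMap.ker (Δ p (r + 1) - lam • LinearMap.id) with hK
  set K1 := LinearMap.ker (Δ (p + 1) (r + 1) - lam • LinearMap.id) with hK1
  set K2 := LinearMap.ker (Δ p (r + 1 + 1) - lam • LinearMap.id) with hK2
  let Φ : K →ₗ[ℂ] K1 × K2 :=
    LinearMap.prod
      (LinearMap.codRestrict K1 ((dbar' (p + 1) (r + 1) ∘ₗ L p (r + 1)) ∘ₗ K.subtype)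
        (fun x => (mem_iff _ _ _).mpr (e1 x.1 ((mem_iff _ _ _).mp x.2))))
      (LinearMap.codRestrict K2 (dbar p (r + 1) ∘ₗ K.subtype)
        (fun x => (mem_iff _ _ _).mpr (e2 x.1 ((mem_iff _ _ _).mp x.2))))
  have hΦ : Function.Injective Φ := by
    rw [injective_iff_map_eq_zero]
    intro x hx
    have h1' : dbar' (p + 1) (r + 1) (L p (r + 1) x.1) = 0 := by
      have := congrArg Prod.fst hx
      exact Subtype.ext_iff.mp this
    have h2' : dbar p (r + 1) x.1 = 0 := by
      have := congrArg Prod.snd hx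
      exact Subtype.ext_iff.mp this
    exact Subtype.ext (inj x.1 ((mem_iff _ _ _).mp x.2) h1' h2')
  haveI : FiniteDimensional ℂ (K1 × K2) := inferInstance
  have fd : FiniteDimensional ℂ K := FiniteDimensional.of_injective Φ hΦ
  refine ⟨fd, ?_⟩
  have hle : Module.finrank ℂ K ≤ Module.finrank ℂ (K1 × K2) :=
    LinearMap.finrank_le_finrank_of_injective hΦ
  rwa [Module.finrank_prod] at hle
end
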